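/- In the width-4 sector S, if the confinement of type-3 particles to R_S(3) is enforced, then type-0 particles remain automatically confined to R_S(0), even when direct flips between adjacent type-0 and type-3 particles are additionally allowed: starting from a configuration in S, any finite sequence of flips (including 0↔3 flips) that never moves a 3 outside R_S(3) also never moves a 0 outside R_S(0). -/
import Mathlib


/-- A single flip: the values at two adjacent sites, which differ by exactly 1,
are swapped; all other sites are unchanged. -/
def FlipStep {N k : ℕ} (c c' : Fin N → Fin k) : Prop :=
  ∃ j j' : Fin N, j.val + 1 = j'.val ∧
    ((c j').val = (c j).val + 1 ∨ (c j).val = (c j').val + 1) ∧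
    c' j = c j' ∧ c' j' = c j ∧ ∀ i : Fin N, i ≠ j → i ≠ j' → c' i = c i

/-- Two configurations are in the same sector iff they are related by finitely many flips. -/
def SameSector {N k : ℕ} (c c' : Fin N → Fin k) : Prop :=
  Relation.ReflTransGen FlipStep c c'

/-- The region of confinement of type-`n` particles in the sector of `c`:
all sites that a type-`n` particle can occupy in some configuration of the sector. -/
def RoC {N k : ℕ} (c : Fin N → Fin k) (n : Fin k) : Set (Fin N) :=
  {j | ∃ c', SameSector c c' ∧ c' j = n}


/-- An extended flip: either an ordinary flip (adjacent values differing by 1) or a swap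
of adjacent values 0 and 3. -/
def ExtFlipStep {N : ℕ} (c c' : Fin N → Fin 4) : Prop :=
  ∃ j j' : Fin N, j.val + 1 = j'.val ∧
    ((c j').val = (c j).val + 1 ∨ (c j).val = (c j').val + 1 ∨
      (c j = 0 ∧ c j' = 3) ∨ (c j = 3 ∧ c j' = 0)) ∧
    c' j = c j' ∧ c' j' = c j ∧ ∀ i : Fin N, i ≠ j → i ≠ j' → c' i = c i



namespace AutoConf

variable {N : ℕ}

/-- count of sites `i < p` whose value satisfies `q`. -/
def cnt (c : Fin N → Fin 4) (q : Fin 4 → Prop) [DecidablePred q] (p : Fin N) : ℕ :=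
  (Finset.univ.filter (fun i : Fin N => i < p ∧ q (c i))).card

def isM (v : Fin 4) : Prop := v = 0 ∨ v = 3

instance : DecidablePred isM := fun v => inferInstanceAs (Decidable (_ ∨ _))

/-- marker data: the marker with index `m` has value `v` and left-count `φ`. -/
def MD (c : Fin N → Fin 4) (m : ℕ) (v : Fin 4) (φ : ℕ) : Prop :=
  ∃ p : Fin N, isM (c p) ∧ cnt c isM p = m ∧ c p = v ∧
    φ = (if c p = 0 then cnt c (· ≠ 1) p else cnt c (· ≠ 2) p)

lemma fin4_cases : ∀ v : Fin 4, v = 0 ∨ v = 1 ∨ v = 2 ∨ v = 3 := by decide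

lemma cnt_congr {c d : Fin N → Fin 4} (q : Fin 4 → Prop) [DecidablePred q] (p : Fin N)
    (h : ∀ i : Fin N, i < p → c i = d i) : cnt c q p = cnt d q p := by
  unfold cnt
  congr 1
  apply Finset.filter_congr
  intro i _
  by_cases hi : i < p
  · simp [hi, h i hi]
  · simp [hi]

lemma cnt_succ (c : Fin N → Fin 4) (q : Fin 4 → Prop) [DecidablePred q] {j j' : Fin N}
    (hjj : (j : ℕ) + 1 = (j' : ℕ)) :
    cnt c q j' = cnt c q j + (if q (c j) then 1 else 0) := by
  unfold cnt
  have hmem : ∀ i : Fin N, i < j' ↔ (i < j ∨ i = j) := by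
    intro i
    rw [Fin.lt_def, Fin.lt_def, Fin.ext_iff]
    omega
  by_cases hq : q (c j)
  · rw [if_pos hq]
    have hset : (Finset.univ.filter (fun i : Fin N => i < j' ∧ q (c i))) =
        insert j (Finset.univ.filter (fun i : Fin N => i < j ∧ q (c i))) := by
      ext i
      simp only [Finset.mem_insert, Finset.mem_filter, Finset.mem_univ, true_and]
      constructor
      · rintro ⟨h1, h2⟩
        rcases (hmem i).1 h1 with h | h
        · exact Or.inr ⟨h, h2⟩
        · exact Or.inl h
      · rintro (rfl | ⟨h1, h2⟩)
        · exact ⟨(hmem _).2 (Or.inr rfl), hq⟩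
        · exact ⟨(hmem i).2 (Or.inl h1), h2⟩
    rw [hset, Finset.card_insert_of_notMem]
    simp [lt_irrefl]
  · rw [if_neg hq]
    have hset : (Finset.univ.filter (fun i : Fin N => i < j' ∧ q (c i))) =
        (Finset.univ.filter (fun i : Fin N => i < j ∧ q (c i))) := by
      ext i
      simp only [Finset.mem_filter, Finset.mem_univ, true_and]
      constructor
      · rintro ⟨h1, h2⟩
        rcases (hmem i).1 h1 with h | rfl
        · exact ⟨h, h2⟩
        · exact absurd h2 hq
      · rintro ⟨h1, h2⟩
        exact ⟨(hmem i).2 (Or.inl h1), h2⟩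
    rw [hset]
    simp

/-- counts are invariant under a swap of two sites which are on the same side of `p`. -/
lemma cnt_swap {c c' : Fin N → Fin 4} {j j' : Fin N}
    (h1 : c' j = c j') (h2 : c' j' = c j) (h3 : ∀ i : Fin N, i ≠ j → i ≠ j' → c' i = c i)
    (q : Fin 4 → Prop) [DecidablePred q] (p : Fin N) (hp : j < p ↔ j' < p) :
    cnt c' q p = cnt c q p := by
  have hcs : ∀ i : Fin N, c' i = c (Equiv.swap j j' i) := by
    intro i
    rcases eq_or_ne i j with rfl | hij
    · rw [Equiv.swap_apply_left]; exact h1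
    rcases eq_or_ne i j' with rfl | hij'
    · rw [Equiv.swap_apply_right]; exact h2
    · rw [Equiv.swap_apply_of_ne_of_ne hij hij']; exact h3 i hij hij'
  have hlt : ∀ i : Fin N, i < p ↔ Equiv.swap j j' i < p := by
    intro i
    rcases eq_or_ne i j with rfl | hij
    · rw [Equiv.swap_apply_left]; exact hp
    rcases eq_or_ne i j' with rfl | hij'
    · rw [Equiv.swap_apply_right]; exact hp.symm
    · rw [Equiv.swap_apply_of_ne_of_ne hij hij']
  unfold cnt
  apply Finset.card_equiv (Equiv.swap j j')
  intro i
  simp only [Finset.mem_filter, Finset.mem_univ, true_and]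
  rw [← hcs i, ← hlt i]

/-- key identity : (# of non-1) + (# of non-2) = p + (# of markers), to the left of p. -/
lemma cnt_identity (c : Fin N → Fin 4) (p : Fin N) :
    cnt c (· ≠ 1) p + cnt c (· ≠ 2) p = (p : ℕ) + cnt c isM p := by
  have hval : (p : ℕ) = (Finset.univ.filter (fun i : Fin N => i < p)).card := by
    have : (Finset.univ.filter (fun i : Fin N => i < p)) = Finset.Iio p := by
      ext i; simp
    rw [this, Fin.card_Iio]
  rw [hval]
  unfold cnt
  rw [Finset.card_filter, Finset.card_filter, Finset.card_filter, Finset.card_filter,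
    ← Finset.sum_add_distrib, ← Finset.sum_add_distrib]
  apply Finset.sum_congr rfl
  intro i _
  by_cases hi : i < p
  · simp only [hi, true_and, if_true]
    rcases fin4_cases (c i) with h | h | h | h <;> simp [h, isM]
  · simp [hi]

/-- interval comparison: markers gained are at most `q`-sites gained. -/
lemma cnt_gap (c : Fin N → Fin 4) (q : Fin 4 → Prop) [DecidablePred q]
    (him : ∀ v : Fin 4, isM v → q v) {p p' : Fin N} (hpp : p ≤ p') :
    cnt c q p + cnt c isM p' ≤ cnt c q p' + cnt c isM p := by
  classical
  set S : Finset (Fin N) := Finset.univ.filter (fun i => i < p ∧ isM (c i)) with hS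
  set S' : Finset (Fin N) := Finset.univ.filter (fun i => i < p' ∧ isM (c i)) with hS'
  set T : Finset (Fin N) := Finset.univ.filter (fun i => i < p ∧ q (c i)) with hT
  set T' : Finset (Fin N) := Finset.univ.filter (fun i => i < p' ∧ q (c i)) with hT'
  have hSS : S ⊆ S' := by
    intro i hi
    simp only [hS, hS', Finset.mem_filter, Finset.mem_univ, true_and] at *
    exact ⟨lt_of_lt_of_le hi.1 hpp, hi.2⟩
  have hTT : T ⊆ T' := by
    intro i hi
    simp only [hT, hT', Finset.mem_filter, Finset.mem_univ, true_and] at *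
    exact ⟨lt_of_lt_of_le hi.1 hpp, hi.2⟩
  have hsub : S' \ S ⊆ T' \ T := by
    intro i hi
    simp only [hS, hS', hT, hT', Finset.mem_sdiff, Finset.mem_filter, Finset.mem_univ,
      true_and] at *
    refine ⟨⟨hi.1.1, him _ hi.1.2⟩, ?_⟩
    intro hcon
    exact (hi.2 ⟨hcon.1, hi.1.2⟩)
  have h1 := Finset.card_sdiff_add_card_eq_card hSS
  have h2 := Finset.card_sdiff_add_card_eq_card hTT
  have h3 := Finset.card_le_card hsub
  show T.card + S'.card ≤ T'.card + S.card
  omega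

lemma cnt_mono (c : Fin N → Fin 4) (q : Fin 4 → Prop) [DecidablePred q] {p p' : Fin N}
    (hpp : p ≤ p') : cnt c q p ≤ cnt c q p' := by
  apply Finset.card_le_card
  intro i hi
  simp only [Finset.mem_filter, Finset.mem_univ, true_and] at *
  exact ⟨lt_of_lt_of_le hi.1 hpp, hi.2⟩

lemma cnt_strict (c : Fin N → Fin 4) {p p' : Fin N} (hm : isM (c p)) (hpp : p < p') :
    cnt c isM p < cnt c isM p' := by
  have : insert p (Finset.univ.filter (fun i => i < p ∧ isM (c i))) ⊆
      Finset.univ.filter (fun i => i < p' ∧ isM (c i)) := by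
    intro i hi
    rcases Finset.mem_insert.1 hi with rfl | hi
    · simp only [Finset.mem_filter, Finset.mem_univ, true_and]
      exact ⟨hpp, hm⟩
    · simp only [Finset.mem_filter, Finset.mem_univ, true_and] at *
      exact ⟨lt_trans hi.1 hpp, hi.2⟩
  have hcard := Finset.card_le_card this
  rw [Finset.card_insert_of_notMem (by simp [lt_irrefl])] at hcard
  unfold cnt
  omega

end AutoConf
-- continuation: to be appended after aux (inside file with FlipStep defs)
namespace AutoConf
variable {N : ℕ}

lemma cnt_succ_pos (c : Fin N → Fin 4) (q : Fin 4 → Prop) [DecidablePred q] {j j' : Fin N}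
    (hjj : (j : ℕ) + 1 = (j' : ℕ)) (hq : q (c j)) : cnt c q j' = cnt c q j + 1 := by
  rw [cnt_succ c q hjj, if_pos hq]

lemma cnt_succ_neg (c : Fin N → Fin 4) (q : Fin 4 → Prop) [DecidablePred q] {j j' : Fin N}
    (hjj : (j : ℕ) + 1 = (j' : ℕ)) (hq : ¬ q (c j)) : cnt c q j' = cnt c q j := by
  rw [cnt_succ c q hjj, if_neg hq]; rfl

lemma flip_MD {c c' : Fin N → Fin 4} (h : FlipStep c c') {m : ℕ} {v : Fin 4} {φ : ℕ}
    (hmd : MD c m v φ) : MD c' m v φ := by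
  obtain ⟨j, j', hjj, hvals, h1, h2, h3⟩ := h
  obtain ⟨p, hmark, hMk, hval, hφ⟩ := hmd
  have hjlt : j < j' := by rw [Fin.lt_def]; omega
  have hcl : ∀ i : Fin N, i < j → c' i = c i :=
    fun i hi => h3 i (ne_of_lt hi) (ne_of_lt (lt_trans hi hjlt))
  rcases eq_or_ne p j with rfl | hpj
  · -- marker at the left site of the flip
    rcases hmark with h0 | h0
    · -- value 0, partner must be 1
      rw [h0] at hvals
      have hb : c j' = 1 := by
        rcases fin4_cases (c j') with hb | hb | hb | hb <;> rw [hb] at hvals <;>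
          first
            | exact hb
            | exact absurd hvals (by decide)
      have hj'0 : c' j' = 0 := by rw [h2, h0]
      have hv0 : v = 0 := by rw [← hval, h0]
      refine ⟨j', by rw [hj'0]; exact Or.inl rfl, ?_, by rw [hj'0, hv0], ?_⟩
      · rw [cnt_succ_neg c' isM hjj (by rw [h1, hb]; decide), cnt_congr isM p hcl]
        exact hMk
      · rw [if_pos hj'0,
          cnt_succ_neg c' (· ≠ 1) hjj (by simp [h1, hb]), cnt_congr (· ≠ 1) p hcl]
        rw [if_pos h0] at hφ
        exact hφ
    · -- value 3, partner must be 2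
      rw [h0] at hvals
      have hb : c j' = 2 := by
        rcases fin4_cases (c j') with hb | hb | hb | hb <;> rw [hb] at hvals <;>
          first
            | exact hb
            | exact absurd hvals (by decide)
      have hj'3 : c' j' = 3 := by rw [h2, h0]
      have hv3 : v = 3 := by rw [← hval, h0]
      refine ⟨j', by rw [hj'3]; exact Or.inr rfl, ?_, by rw [hj'3, hv3], ?_⟩
      · rw [cnt_succ_neg c' isM hjj (by rw [h1, hb]; decide), cnt_congr isM p hcl]
        exact hMk
      · rw [if_neg (by rw [hj'3]; decide),
          cnt_succ_neg c' (· ≠ 2) hjj (by simp [h1, hb]), cnt_congr (· ≠ 2) p hcl]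
        rw [if_neg (by rw [h0]; decide)] at hφ
        exact hφ
  rcases eq_or_ne p j' with rfl | hpj'
  · -- marker at the right site of the flip
    rcases hmark with h0 | h0
    · rw [h0] at hvals
      have hb : c j = 1 := by
        rcases fin4_cases (c j) with hb | hb | hb | hb <;> rw [hb] at hvals <;>
          first
            | exact hb
            | exact absurd hvals (by decide)
      have hj0 : c' j = 0 := by rw [h1, h0]
      have hv0 : v = 0 := by rw [← hval, h0]
      refine ⟨j, by rw [hj0]; exact Or.inl rfl, ?_, by rw [hj0, hv0], ?_⟩
      · rw [cnt_congr isM j hcl]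
        rw [cnt_succ_neg c isM hjj (by rw [hb]; decide)] at hMk
        exact hMk
      · rw [if_pos hj0, cnt_congr (· ≠ 1) j hcl]
        rw [if_pos h0, cnt_succ_neg c (· ≠ 1) hjj (by simp [hb])] at hφ
        exact hφ
    · rw [h0] at hvals
      have hb : c j = 2 := by
        rcases fin4_cases (c j) with hb | hb | hb | hb <;> rw [hb] at hvals <;>
          first
            | exact hb
            | exact absurd hvals (by decide)
      have hj3 : c' j = 3 := by rw [h1, h0]
      have hv3 : v = 3 := by rw [← hval, h0]
      refine ⟨j, by rw [hj3]; exact Or.inr rfl, ?_, by rw [hj3, hv3], ?_⟩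
      · rw [cnt_congr isM j hcl]
        rw [cnt_succ_neg c isM hjj (by rw [hb]; decide)] at hMk
        exact hMk
      · rw [if_neg (by rw [hj3]; decide), cnt_congr (· ≠ 2) j hcl]
        rw [if_neg (by rw [h0]; decide), cnt_succ_neg c (· ≠ 2) hjj (by simp [hb])] at hφ
        exact hφ
  · -- marker away from the flip
    have hcp : c' p = c p := h3 p hpj hpj'
    have hp : j < p ↔ j' < p := by
      rw [Fin.lt_def, Fin.lt_def]
      have e1 : (p : ℕ) ≠ (j : ℕ) := fun hh => hpj (Fin.ext hh)
      have e2 : (p : ℕ) ≠ (j' : ℕ) := fun hh => hpj' (Fin.ext hh)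
      omega
    refine ⟨p, by rw [hcp]; exact hmark, ?_, by rw [hcp]; exact hval, ?_⟩
    · rw [cnt_swap h1 h2 h3 isM p hp]
      exact hMk
    · rw [hcp, cnt_swap h1 h2 h3 (· ≠ 1) p hp, cnt_swap h1 h2 h3 (· ≠ 2) p hp]
      exact hφ

lemma flip_symm {c c' : Fin N → Fin 4} (h : FlipStep c c') : FlipStep c' c := by
  obtain ⟨j, j', hjj, hvals, h1, h2, h3⟩ := h
  exact ⟨j, j', hjj, by rw [h1, h2]; exact hvals.symm, h2.symm, h1.symm,
    fun i hi hi' => (h3 i hi hi').symm⟩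

lemma sector_MD {c c' : Fin N → Fin 4} (h : SameSector c c') (m : ℕ) (v : Fin 4) (φ : ℕ) :
    MD c m v φ ↔ MD c' m v φ := by
  induction h with
  | refl => exact Iff.rfl
  | tail _ hbc ih => exact ih.trans ⟨flip_MD hbc, flip_MD (flip_symm hbc)⟩

lemma disj {c c'' : Fin N → Fin 4} (h : ∀ m v φ, MD c m v φ ↔ MD c'' m v φ)
    {j : Fin N} (h0 : c j = 0) (h3 : c'' j = 3) : False := by
  classical
  have hm0 : isM (c j) := by rw [h0]; exact Or.inl rfl
  have hm3 : isM (c'' j) := by rw [h3]; exact Or.inr rfl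
  have hmd1 : MD c (cnt c isM j) 0 (cnt c (· ≠ 1) j) :=
    ⟨j, hm0, rfl, h0, (if_pos h0).symm⟩
  have hmd2 : MD c'' (cnt c'' isM j) 3 (cnt c'' (· ≠ 2) j) :=
    ⟨j, hm3, rfl, h3, (if_neg (by rw [h3]; decide)).symm⟩
  obtain ⟨p'', hm'', hMk'', hval'', hφ''⟩ := (h _ _ _).1 hmd1
  obtain ⟨p, hmp, hMkp, hvalp, hφp⟩ := (h _ _ _).2 hmd2
  rw [if_pos hval''] at hφ''
  rw [if_neg (by rw [hvalp]; decide)] at hφp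
  have hone : ∀ w : Fin 4, isM w → (fun x => x ≠ 1) w := by decide
  have htwo : ∀ w : Fin 4, isM w → (fun x => x ≠ 2) w := by decide
  have id1 := cnt_identity c j
  have id2 := cnt_identity c'' j
  rcases lt_trichotomy p j with hpj | rfl | hpj
  · -- 3-marker left of j in c
    have hlk : cnt c isM p < cnt c isM j := cnt_strict c hmp hpj
    have g1 := cnt_gap c (· ≠ 2) htwo (le_of_lt hpj)
    have hjp : j ≤ p'' := by
      by_contra hcon
      push_neg at hcon
      have := cnt_mono c'' isM (le_of_lt hcon)
      rw [hMk''] at this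
      omega
    have g2 := cnt_gap c'' (· ≠ 1) hone hjp
    rw [hMk''] at g2
    rw [hMkp] at g1
    omega
  · rw [h0] at hvalp
    exact absurd hvalp (by decide)
  · -- 3-marker right of j in c
    have hkl : cnt c isM j < cnt c isM p := cnt_strict c hm0 hpj
    have g1 := cnt_gap c (· ≠ 2) htwo (le_of_lt hpj)
    have hjp : p'' ≤ j := by
      by_contra hcon
      push_neg at hcon
      have := cnt_mono c'' isM (le_of_lt hcon)
      rw [hMk''] at this
      omega
    have g2 := cnt_gap c'' (· ≠ 1) hone hjp
    rw [hMk''] at g2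
    rw [hMkp] at g1
    omega

end AutoConf

/-- Automatic confinement of type-0 particles: starting from `c₀`, any finite sequence of
extended flips (including 0↔3 flips) in which every intermediate configuration keeps all
type-3 particles inside `R_S(3)` also keeps all type-0 particles inside `R_S(0)`. -/
theorem auto_confinement_type0 {N : ℕ} (c₀ : Fin N → Fin 4)
    (c' : Fin N → Fin 4)
    (h : Relation.ReflTransGen
      (fun c d => ExtFlipStep c d ∧ ∀ j : Fin N, d j = 3 → j ∈ RoC c₀ 3) c₀ c') :
    ∀ j : Fin N, c' j = 0 → j ∈ RoC c₀ 0 := by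
  have key : SameSector c₀ c' := by
    induction h with
    | refl => exact Relation.ReflTransGen.refl
    | @tail b e hab hbe ih =>
      obtain ⟨hext, hconf⟩ := hbe
      obtain ⟨j, j', hjj, hcase, h1, h2, h3⟩ := hext
      rcases hcase with hv | hv | ⟨hb0, hb3⟩ | ⟨hb3, hb0⟩
      · exact ih.tail ⟨j, j', hjj, Or.inl hv, h1, h2, h3⟩
      · exact ih.tail ⟨j, j', hjj, Or.inr hv, h1, h2, h3⟩
      · exfalso
        obtain ⟨e2, he2, he23⟩ := hconf j (by rw [h1, hb3])
        exact AutoConf.disj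
          (fun m v φ => ((AutoConf.sector_MD ih m v φ).symm).trans (AutoConf.sector_MD he2 m v φ))
          hb0 he23
      · exfalso
        obtain ⟨e2, he2, he23⟩ := hconf j' (by rw [h2, hb3])
        exact AutoConf.disj
          (fun m v φ => ((AutoConf.sector_MD ih m v φ).symm).trans (AutoConf.sector_MD he2 m v φ))
          hb0 he23
  intro j hj
  exact ⟨c', key, hj⟩
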